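/- The linear order ℝ × {0,1} with the lexicographic ordering ((x,i) < (y,j) iff x < y, or x = y and i < j) is topologically separable but not order-theoretically separable. -/

import Mathlib

noncomputable section

open Set

/-- A linear order is topologically separable if some countable set meets every
nonempty open interval. -/
def TopSeparable (L : Type) [LinearOrder L] : Prop :=
  ∃ D : Set L, D.Countable ∧
    ∀ a b : L, (Set.Ioo a b).Nonempty → (D ∩ Set.Ioo a b).Nonempty

/-- A linear order is order-theoretically separable if there is a countable `D` such
that for all `a < b` there is `d ∈ D` with `a ≤ d ≤ b`. -/
def OrderSeparable (L : Type) [LinearOrder L] : Prop :=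
  ∃ D : Set L, D.Countable ∧ ∀ a b : L, a < b → ∃ d ∈ D, a ≤ d ∧ d ≤ b

/-- The double arrow: `ℝ × {0,1}` (here `{0,1}` is `Bool` with `false < true`) with the
lexicographic ordering is topologically separable but not order-theoretically
separable. -/
theorem doubleArrow_topSeparable_not_orderSeparable :
    TopSeparable (ℝ ×ₗ Bool) ∧ ¬ OrderSeparable (ℝ ×ₗ Bool) := by
  constructor
  · refine ⟨toLex '' ((fun q : ℚ => ((q : ℝ), false)) '' Set.univ), ?_, ?_⟩
    · exact ((Set.countable_univ).image _).image _
    · rintro a b ⟨c, hac, hcb⟩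
      -- first coordinates must be strictly apart
      have hab : (ofLex a).1 < (ofLex b).1 := by
        rcases Prod.Lex.lt_iff.mp hac with h | ⟨h1, h2⟩ <;>
        rcases Prod.Lex.lt_iff.mp hcb with h' | ⟨h1', h2'⟩
        · exact h.trans h'
        · exact h1' ▸ h
        · exact h1 ▸ h'
        · rw [Bool.lt_iff] at h2 h2'; rw [h2.2] at h2'; exact absurd h2'.1 (by simp)
      obtain ⟨q, hq1, hq2⟩ := exists_rat_btwn hab
      refine ⟨toLex ((q : ℝ), false), ⟨⟨(q, false), ⟨q, trivial, rfl⟩, rfl⟩, ?_, ?_⟩⟩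
      · exact Prod.Lex.lt_iff.mpr (Or.inl hq1)
      · exact Prod.Lex.lt_iff.mpr (Or.inl hq2)
  · rintro ⟨D, hDc, hD⟩
    have : (Set.univ : Set ℝ) ⊆ (fun d : ℝ ×ₗ Bool => (ofLex d).1) '' D := by
      intro x _
      have hlt : toLex ((x : ℝ), false) < toLex ((x : ℝ), true) :=
        Prod.Lex.lt_iff.mpr (Or.inr ⟨rfl, Bool.false_lt_true⟩)
      obtain ⟨d, hdD, hd1, hd2⟩ := hD _ _ hlt
      have h1 : x ≤ (ofLex d).1 := by
        rcases Prod.Lex.le_iff.mp hd1 with h | ⟨h, _⟩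
        exacts [h.le, h.le]
      have h2 : (ofLex d).1 ≤ x := by
        rcases Prod.Lex.le_iff.mp hd2 with h | ⟨h, _⟩
        exacts [h.le, h.le]
      exact ⟨d, hdD, le_antisymm h2 h1⟩
    exact Cardinal.not_countable_real ((hDc.image _).mono this)

end
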